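/- For all optimization problems P and Q (both interpreted as CO problems or both interpreted as ASO problems), P ≡^s Q (that is, P ≡^{s,[1,∞]} Q) if and only if: (1) μ(P) = μ(Q); (2) (>^P)_{μ(P)} = (>^Q)_{μ(Q)}; and (3) for every I, J ∈ μ(P), diff^P(I,J) = diff^Q(I,J). -/

import Mathlib

open scoped Classical

/-- Propositional formulas over a universe `U` of atoms, built from atoms,
`⊥`, conjunction, disjunction and implication. -/
inductive Formula (U : Type) : Type where
  | atom : U → Formula U
  | bot  : Formula U
  | conj : Formula U → Formula U → Formula U
  | disj : Formula U → Formula U → Formula U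
  | imp  : Formula U → Formula U → Formula U

variable {U : Type}

/-- Classical satisfaction `I ⊨ φ`. -/
def Sat (I : Set U) : Formula U → Prop
  | .atom a => a ∈ I
  | .bot => False
  | .conj φ ψ => Sat I φ ∧ Sat I ψ
  | .disj φ ψ => Sat I φ ∨ Sat I ψ
  | .imp φ ψ => Sat I φ → Sat I ψ

/-- Classical satisfaction of a theory. -/
def SatTheory (I : Set U) (T : Set (Formula U)) : Prop := ∀ φ ∈ T, Sat I φ

/-- `Mod T`: the classical models of a theory `T`. -/
def models (T : Set (Formula U)) : Set (Set U) := {I | SatTheory I T}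

/-- HT-satisfaction `⟨I, J⟩ ⊨_HT φ` (for `I ⊆ J`). -/
def SatHT (I J : Set U) : Formula U → Prop
  | .atom a => a ∈ I
  | .bot => False
  | .conj φ ψ => SatHT I J φ ∧ SatHT I J ψ
  | .disj φ ψ => SatHT I J φ ∨ SatHT I J ψ
  | .imp φ ψ => Sat J (Formula.imp φ ψ) ∧ (¬ SatHT I J φ ∨ SatHT I J ψ)

/-- HT-satisfaction of a theory. -/
def SatHTTheory (I J : Set U) (T : Set (Formula U)) : Prop := ∀ φ ∈ T, SatHT I J φ

/-- `HT T`: the set of HT-models `⟨I,J⟩` (with `I ⊆ J`) of a theory `T`. -/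
def HTmod (T : Set (Formula U)) : Set (Set U × Set U) :=
  {p | p.1 ⊆ p.2 ∧ SatHTTheory p.1 p.2 T}

/-- `AS T`: the equilibrium models (answer sets) of a theory `T`. -/
def AS (T : Set (Formula U)) : Set (Set U) :=
  {I | SatHTTheory I I T ∧ ∀ J : Set U, J ⊂ I → ¬ SatHTTheory J I T}

/-- A ranked preference rule `φ₁ > ⋯ > φₖ ←ʲ ψ` with nonempty head and rank `j ≥ 1`. -/
structure Rule (U : Type) : Type where
  head : List (Formula U)
  body : Formula U
  rank : ℕ
  head_ne : head ≠ []
  rank_pos : 1 ≤ rank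

/-- Satisfaction degree `v_I(r)`: the least (1-based) index of a satisfied head formula
if `I` satisfies the body and some head formula; `1` otherwise. -/
noncomputable def degree (I : Set U) (r : Rule U) : ℕ :=
  if Sat I r.body ∧ ∃ φ ∈ r.head, Sat I φ then
    sInf {n : ℕ | ∃ k : Fin r.head.length, n = k.1 + 1 ∧ Sat I (r.head.get k)}
  else 1

/-- The strict preference `I >^S J` induced by a selector `S`. -/
def gtSel (S : Set (Rule U)) (I J : Set U) : Prop :=
  ∃ r' ∈ S, degree I r' < degree J r' ∧
    (∀ r ∈ S, r.rank = r'.rank → degree I r ≤ degree J r) ∧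
    (∀ r ∈ S, r.rank < r'.rank → degree I r = degree J r)

/-- The indifference `I ≈^S J` induced by a selector `S`. -/
def simSel (S : Set (Rule U)) (I J : Set U) : Prop :=
  ∀ r ∈ S, degree I r = degree J r

/-- The preference `I ≥^S J` induced by a selector `S`. -/
def geSel (S : Set (Rule U)) (I J : Set U) : Prop :=
  simSel S I J ∨ gtSel S I J

/-- An optimization problem: a generator theory plus a finite selector. -/
structure OptProblem (U : Type) : Type where
  gen : Set (Formula U)
  sel : Set (Rule U)
  sel_finite : sel.Finite

/-- Union of optimization problems. -/
def OptProblem.union (P Q : OptProblem U) : OptProblem U :=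
  ⟨P.gen ∪ Q.gen, P.sel ∪ Q.sel, P.sel_finite.union Q.sel_finite⟩

/-- `P_{<i}`: the restriction of `P` to preference rules of rank `< i`. -/
def OptProblem.below (P : OptProblem U) (i : ℕ) : OptProblem U :=
  ⟨P.gen, {r ∈ P.sel | r.rank < i}, P.sel_finite.subset (Set.sep_subset _ _)⟩

/-- The two semantics for generators: classical (CO problems) and
equilibrium-model/answer-set (ASO problems). -/
inductive Sem : Type where
  | co : Sem
  | aso : Sem

/-- `μ(P)`: the outcomes of `P` under the chosen semantics. -/
def outcomes (sem : Sem) (P : OptProblem U) : Set (Set U) :=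
  match sem with
  | Sem.co => models P.gen
  | Sem.aso => AS P.gen

/-- `π(P)`: the preferred (optimal) outcomes of `P`. -/
def pref (sem : Sem) (P : OptProblem U) : Set (Set U) :=
  {I | I ∈ outcomes sem P ∧ ¬ ∃ J ∈ outcomes sem P, gtSel P.sel J I}

/-- `diff^P(I,J)`: the largest `k` with `I ≈^{P_{<k}} J` (`∞` if this holds for all `k`). -/
noncomputable def diff (P : OptProblem U) (I J : Set U) : ℕ∞ :=
  if ∀ k : ℕ, simSel (P.below k).sel I J then ⊤
  else ((sSup {k : ℕ | simSel (P.below k).sel I J} : ℕ) : ℕ∞)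

/-- Restriction `≻_V` of a relation on interpretations to a set `V` of interpretations. -/
def restrictRel (rel : Set U → Set U → Prop) (V : Set (Set U)) : Set U → Set U → Prop :=
  fun A B => rel A B ∧ A ∈ V ∧ B ∈ V

/-- All rules of `S` have rank in the interval `[i,j]` (`j` may be `∞`). -/
def inRankInterval (i : ℕ) (j : ℕ∞) (S : Set (Rule U)) : Prop :=
  ∀ r ∈ S, i ≤ r.rank ∧ (r.rank : ℕ∞) ≤ j

/-- Strong sel-equivalence `P ≡^{s,[i,j]} Q`: same preferred outcomes under addition of any
context from `L^{s,[i,j]}` (empty generator, selector with ranks in `[i,j]`). -/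
def seqv (sem : Sem) (i : ℕ) (j : ℕ∞) (P Q : OptProblem U) : Prop :=
  ∀ R : OptProblem U, R.gen = ∅ → inRankInterval i j R.sel →
    pref sem (P.union R) = pref sem (Q.union R)

/-- Strong gen-equivalence `P ≡_g Q`: same preferred outcomes under addition of any
generator context from `L^g` (empty selector). -/
def geqv (sem : Sem) (P Q : OptProblem U) : Prop :=
  ∀ R : OptProblem U, R.sel = ∅ →
    pref sem (P.union R) = pref sem (Q.union R)

/-- Strong (combined) equivalence `P ≡^{s,[i,j]}_g Q`: same preferred outcomes under addition
of any context from `L^{[i,j]}` (arbitrary generator, selector with ranks in `[i,j]`). -/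
def sgeqv (sem : Sem) (i : ℕ) (j : ℕ∞) (P Q : OptProblem U) : Prop :=
  ∀ R : OptProblem U, inRankInterval i j R.sel →
    pref sem (P.union R) = pref sem (Q.union R)
namespace Stmt3Aux

/-- The true formula. -/
def FT : Formula U := Formula.imp Formula.bot Formula.bot

lemma sat_FT (I : Set U) : Sat I FT := fun h => h

/-- Disjunction of a list of formulas. -/
def bigOr : List (Formula U) → Formula U
  | [] => Formula.bot
  | φ :: l => Formula.disj φ (bigOr l)

lemma sat_bigOr (I : Set U) : ∀ l : List (Formula U), Sat I (bigOr l) ↔ ∃ φ ∈ l, Sat I φ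
  | [] => by simp [bigOr, Sat]
  | φ :: l => by
      simp only [bigOr, Sat, sat_bigOr I l, List.mem_cons]
      constructor
      · rintro (h | ⟨ψ, hψ, hs⟩)
        · exact ⟨φ, Or.inl rfl, h⟩
        · exact ⟨ψ, Or.inr hψ, hs⟩
      · rintro ⟨ψ, (rfl | hψ), hs⟩
        · exact Or.inl hs
        · exact Or.inr ⟨ψ, hψ, hs⟩

lemma degree_pos (I : Set U) (r : Rule U) : 1 ≤ degree I r := by
  unfold degree
  split
  · next h =>
    obtain ⟨φ, hφ, hs⟩ := h.2
    obtain ⟨k, hk⟩ := List.mem_iff_get.1 hφ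
    have hne : {n : ℕ | ∃ k : Fin r.head.length, n = k.1 + 1 ∧ Sat I (r.head.get k)}.Nonempty :=
      ⟨k.1 + 1, k, rfl, by rw [hk]; exact hs⟩
    obtain ⟨k', hk', -⟩ := Nat.sInf_mem hne
    omega
  · exact le_refl 1

/-- The formula `χ(r,d)` expressing `degree · r ≤ d` (for `d ≥ 1`). -/
def chi (r : Rule U) (d : ℕ) : Formula U :=
  Formula.imp (Formula.conj r.body (bigOr r.head)) (bigOr (r.head.take d))

lemma sat_chi_iff (I : Set U) (r : Rule U) {d : ℕ} (hd : 1 ≤ d) :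
    Sat I (chi r d) ↔ degree I r ≤ d := by
  unfold chi degree
  by_cases h : Sat I r.body ∧ ∃ φ ∈ r.head, Sat I φ
  · rw [if_pos h]
    have hante : Sat I (Formula.conj r.body (bigOr r.head)) := ⟨h.1, (sat_bigOr I _).2 h.2⟩
    have hne : {n : ℕ | ∃ k : Fin r.head.length, n = k.1 + 1 ∧ Sat I (r.head.get k)}.Nonempty := by
      obtain ⟨φ, hφ, hs⟩ := h.2
      obtain ⟨k, hk⟩ := List.mem_iff_get.1 hφ
      exact ⟨k.1 + 1, k, rfl, by rw [hk]; exact hs⟩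
    constructor
    · intro hsat
      have := hsat hante
      obtain ⟨φ, hφ, hs⟩ := (sat_bigOr I _).1 this
      obtain ⟨k, hk⟩ := List.mem_iff_get.1 hφ
      have hlen := k.2
      simp only [List.length_take, lt_min_iff] at hlen
      have hklen : (k : ℕ) < r.head.length := hlen.2
      have hkd : (k : ℕ) < d := hlen.1
      have hget : r.head.get ⟨k.1, hklen⟩ = φ := by
        rw [← hk]
        simp only [List.get_eq_getElem, List.getElem_take]
      refine le_trans (Nat.sInf_le ⟨⟨k.1, hklen⟩, rfl, ?_⟩) ?_
      · rw [hget]; exact hs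
      · exact hkd
    · intro hle _
      obtain ⟨k, hkeq, hks⟩ := Nat.sInf_mem hne
      rw [hkeq] at hle
      refine (sat_bigOr I _).2 ⟨r.head.get k, ?_, hks⟩
      have hkd : (k : ℕ) < d := by omega
      have hlt : (k : ℕ) < (r.head.take d).length := by
        simp only [List.length_take, lt_min_iff]; exact ⟨hkd, k.2⟩
      have : (r.head.take d).get ⟨k.1, hlt⟩ = r.head.get k := by
        simp only [List.get_eq_getElem, List.getElem_take]
      rw [← this]; exact List.get_mem _ _
  · rw [if_neg h]
    have : ¬ Sat I (Formula.conj r.body (bigOr r.head)) := by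
      intro hc
      exact h ⟨hc.1, (sat_bigOr I _).1 hc.2⟩
    constructor
    · intro _; exact hd
    · intro _ hc; exact absurd hc this

/-- Formula expressing `e ≤ degree · r`. -/
def geChi (r : Rule U) (e : ℕ) : Formula U :=
  if e ≤ 1 then FT else Formula.imp (chi r (e - 1)) Formula.bot

lemma sat_geChi_iff (I : Set U) (r : Rule U) (e : ℕ) :
    Sat I (geChi r e) ↔ e ≤ degree I r := by
  unfold geChi
  by_cases he : e ≤ 1
  · rw [if_pos he]
    have := degree_pos I r
    simp only [iff_true_intro (sat_FT I), true_iff]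
    omega
  · rw [if_neg he]
    have h1 : 1 ≤ e - 1 := by omega
    have : Sat I (Formula.imp (chi r (e-1)) Formula.bot) ↔ ¬ Sat I (chi r (e-1)) := by
      constructor
      · intro h hc; exact h hc
      · intro h hc; exact absurd hc h
    rw [this, sat_chi_iff I r h1]
    omega

end Stmt3Aux
namespace Stmt3Aux

/-- A two-headed rule `[φ, ⊤] ←^ℓ ⊤`. -/
def mk2 (φ : Formula U) (ℓ : ℕ) (hℓ : 1 ≤ ℓ) : Rule U :=
  ⟨[φ, FT], FT, ℓ, by simp, hℓ⟩

@[simp] lemma rank_mk2 (φ : Formula U) (ℓ : ℕ) (hℓ : 1 ≤ ℓ) : (mk2 φ ℓ hℓ).rank = ℓ := rfl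

lemma degree_mk2 (I : Set U) (φ : Formula U) (ℓ : ℕ) (hℓ : 1 ≤ ℓ) :
    degree I (mk2 φ ℓ hℓ) = if Sat I φ then 1 else 2 := by
  unfold degree
  have hcond : Sat I (mk2 φ ℓ hℓ).body ∧ ∃ ψ ∈ (mk2 φ ℓ hℓ).head, Sat I ψ := by
    refine ⟨sat_FT I, FT, ?_, sat_FT I⟩
    simp [mk2]
  rw [if_pos hcond]
  by_cases hφ : Sat I φ
  · rw [if_pos hφ]
    have h1 : (1 : ℕ) ∈ {n : ℕ | ∃ k : Fin (mk2 φ ℓ hℓ).head.length, n = k.1 + 1 ∧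
        Sat I ((mk2 φ ℓ hℓ).head.get k)} := ⟨⟨0, Nat.zero_lt_two⟩, rfl, hφ⟩
    have hne : Set.Nonempty _ := ⟨1, h1⟩
    obtain ⟨k, hkeq, -⟩ := Nat.sInf_mem hne
    have hle := Nat.sInf_le h1
    omega
  · rw [if_neg hφ]
    have h2 : (2 : ℕ) ∈ {n : ℕ | ∃ k : Fin (mk2 φ ℓ hℓ).head.length, n = k.1 + 1 ∧
        Sat I ((mk2 φ ℓ hℓ).head.get k)} := ⟨⟨1, Nat.one_lt_two⟩, rfl, sat_FT I⟩
    have hne : Set.Nonempty _ := ⟨2, h2⟩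
    obtain ⟨⟨kv, hkv⟩, hkeq, hks⟩ := Nat.sInf_mem hne
    have hkv2 : kv < 2 := hkv
    have hle := Nat.sInf_le h2
    match kv, hkv with
    | 0, hkv => exact absurd hks hφ
    | 1, hkv => rw [hkeq]

/-- Gadget rule of rank `ℓ` whose degree is `1` iff `degree · r ≤ d`, else `2`. -/
def gLE (r : Rule U) (d : ℕ) (ℓ : ℕ) (hℓ : 1 ≤ ℓ) : Rule U := mk2 (chi r d) ℓ hℓ

/-- Gadget rule of rank `ℓ` whose degree is `1` iff `e ≤ degree · r`, else `2`. -/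
def gGE (r : Rule U) (e : ℕ) (ℓ : ℕ) (hℓ : 1 ≤ ℓ) : Rule U := mk2 (geChi r e) ℓ hℓ

@[simp] lemma rank_gLE (r : Rule U) (d ℓ : ℕ) (hℓ : 1 ≤ ℓ) : (gLE r d ℓ hℓ).rank = ℓ := rfl
@[simp] lemma rank_gGE (r : Rule U) (e ℓ : ℕ) (hℓ : 1 ≤ ℓ) : (gGE r e ℓ hℓ).rank = ℓ := rfl

lemma degree_gLE (K : Set U) (r : Rule U) {d : ℕ} (hd : 1 ≤ d) (ℓ : ℕ) (hℓ : 1 ≤ ℓ) :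
    degree K (gLE r d ℓ hℓ) = if degree K r ≤ d then 1 else 2 := by
  rw [gLE, degree_mk2]
  congr 1
  · exact propext (sat_chi_iff K r hd)

lemma degree_gGE (K : Set U) (r : Rule U) (e : ℕ) (ℓ : ℕ) (hℓ : 1 ≤ ℓ) :
    degree K (gGE r e ℓ hℓ) = if e ≤ degree K r then 1 else 2 := by
  rw [gGE, degree_mk2]
  congr 1
  · exact propext (sat_geChi_iff K r e)

lemma degree_gLE_le_iff {K X : Set U} {r : Rule U} {d : ℕ} (hd : 1 ≤ d) {ℓ : ℕ} {hℓ : 1 ≤ ℓ}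
    (hX : degree X r ≤ d) :
    (degree K (gLE r d ℓ hℓ) ≤ degree X (gLE r d ℓ hℓ) ↔ degree K r ≤ d) := by
  rw [degree_gLE K r hd, degree_gLE X r hd, if_pos hX]
  by_cases h : degree K r ≤ d <;> simp [h]

lemma degree_gGE_le_iff {K X : Set U} {r : Rule U} {e : ℕ} {ℓ : ℕ} {hℓ : 1 ≤ ℓ}
    (hX : e ≤ degree X r) :
    (degree K (gGE r e ℓ hℓ) ≤ degree X (gGE r e ℓ hℓ) ↔ e ≤ degree K r) := by
  rw [degree_gGE, degree_gGE, if_pos hX]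
  by_cases h : e ≤ degree K r <;> simp [h]

end Stmt3Aux
namespace Stmt3Aux

/-- `simB P k I J`: all rules of `P` of rank `< k` have equal degrees in `I` and `J`. -/
def simB (P : OptProblem U) (k : ℕ) (I J : Set U) : Prop :=
  ∀ r ∈ P.sel, r.rank < k → degree I r = degree J r

lemma simB_iff (P : OptProblem U) (k : ℕ) (I J : Set U) :
    simSel (P.below k).sel I J ↔ simB P k I J := by
  constructor
  · intro h r hr hrk; exact h r ⟨hr, hrk⟩
  · rintro h r ⟨hr, hrk⟩; exact h r hr hrk

lemma simB_mono (P : OptProblem U) {k k' : ℕ} (h : k' ≤ k) {I J : Set U} :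
    simB P k I J → simB P k' I J :=
  fun hs r hr hrk => hs r hr (lt_of_lt_of_le hrk h)

lemma simB_symm {P : OptProblem U} {k : ℕ} {I J : Set U} (h : simB P k I J) : simB P k J I :=
  fun r hr hrk => (h r hr hrk).symm

lemma simB_zero (P : OptProblem U) (I J : Set U) : simB P 1 I J :=
  fun r hr hrk => absurd r.rank_pos (by omega)

/-- `simB P k I J` holds iff `(k : ℕ∞) ≤ diff P I J`. -/
lemma simB_iff_le_diff (P : OptProblem U) (k : ℕ) (I J : Set U) :
    simB P k I J ↔ (k : ℕ∞) ≤ diff P I J := by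
  unfold diff
  by_cases hall : ∀ k : ℕ, simSel (P.below k).sel I J
  · rw [if_pos hall]
    simp only [le_top, iff_true]
    exact (simB_iff P k I J).1 (hall k)
  · rw [if_neg hall]
    set A : Set ℕ := {k : ℕ | simSel (P.below k).sel I J} with hA
    have hdc : ∀ {a b : ℕ}, a ≤ b → b ∈ A → a ∈ A := by
      intro a b hab hb
      exact (simB_iff P a I J).2 (simB_mono P hab ((simB_iff P b I J).1 hb))
    have h0 : (0 : ℕ) ∈ A := by
      refine (simB_iff P 0 I J).2 (fun r hr hrk => absurd hrk (by omega))
    have hbdd : BddAbove A := by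
      push_neg at hall
      obtain ⟨k0, hk0⟩ := hall
      refine ⟨k0, fun a ha => ?_⟩
      by_contra hlt
      push_neg at hlt
      exact hk0 (hdc (le_of_lt hlt) ha)
    have hsupmem : sSup A ∈ A := Nat.sSup_mem ⟨0, h0⟩ hbdd
    rw [Nat.cast_le]
    constructor
    · intro h
      exact le_csSup hbdd ((simB_iff P k I J).2 h)
    · intro h
      exact (simB_iff P k I J).1 (hdc h hsupmem)

lemma diff_eq_of_simB_iff {P Q : OptProblem U} {I J : Set U}
    (h : ∀ k, simB P k I J ↔ simB Q k I J) : diff P I J = diff Q I J := by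
  have hset : {k : ℕ | simSel (P.below k).sel I J} = {k : ℕ | simSel (Q.below k).sel I J} := by
    ext k
    simp only [Set.mem_setOf_eq, simB_iff]
    exact h k
  unfold diff
  rw [hset]
  by_cases hall : ∀ k : ℕ, simSel (Q.below k).sel I J
  · rw [if_pos hall, if_pos (fun k => (simB_iff P k I J).2 ((h k).2 ((simB_iff Q k I J).1 (hall k))))]
  · rw [if_neg hall, if_neg (fun hc => hall (fun k => (simB_iff Q k I J).2 ((h k).1 ((simB_iff P k I J).1 (hc k)))))]

lemma simB_iff_of_diff_eq {P Q : OptProblem U} {I J : Set U}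
    (h : diff P I J = diff Q I J) (k : ℕ) : simB P k I J ↔ simB Q k I J := by
  rw [simB_iff_le_diff, simB_iff_le_diff, h]

lemma outcomes_union_empty (sem : Sem) (P R : OptProblem U) (h : R.gen = ∅) :
    outcomes sem (P.union R) = outcomes sem P := by
  have hgen : (P.union R).gen = P.gen := by
    show P.gen ∪ R.gen = P.gen
    rw [h, Set.union_empty]
  cases sem
  · show models (P.union R).gen = models P.gen
    rw [hgen]
  · show AS (P.union R).gen = AS P.gen
    rw [hgen]

lemma mem_pref_union {sem : Sem} {P R : OptProblem U} (h : R.gen = ∅) (I : Set U) :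
    I ∈ pref sem (P.union R) ↔
      I ∈ outcomes sem P ∧ ∀ J ∈ outcomes sem P, ¬ gtSel (P.sel ∪ R.sel) J I := by
  unfold pref
  rw [Set.mem_setOf_eq, outcomes_union_empty sem P R h]
  constructor
  · rintro ⟨h1, h2⟩
    exact ⟨h1, fun J hJ hg => h2 ⟨J, hJ, hg⟩⟩
  · rintro ⟨h1, h2⟩
    exact ⟨h1, fun ⟨J, hJ, hg⟩ => h2 J hJ hg⟩

lemma seqv_symm {sem : Sem} {P Q : OptProblem U} (h : seqv sem 1 ⊤ P Q) : seqv sem 1 ⊤ Q P :=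
  fun R h1 h2 => (h R h1 h2).symm

/-- Build a context problem from a finite selector. -/
def ctx (S : Set (Rule U)) (hS : S.Finite) : OptProblem U := ⟨∅, S, hS⟩

lemma ctx_ok (S : Set (Rule U)) (hS : S.Finite) :
    (ctx S hS).gen = ∅ ∧ inRankInterval 1 ⊤ (ctx S hS).sel :=
  ⟨rfl, fun r _ => ⟨r.rank_pos, le_top⟩⟩

end Stmt3Aux
namespace Stmt3Aux

lemma gt_transfer {P Q : OptProblem U} {V : Set (Set U)}
    (hgt : ∀ A ∈ V, ∀ B ∈ V, gtSel P.sel A B → gtSel Q.sel A B)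
    (hsim : ∀ A ∈ V, ∀ B ∈ V, ∀ k, (simB P k A B ↔ simB Q k A B))
    {S : Set (Rule U)} {A B : Set U} (hA : A ∈ V) (hB : B ∈ V) :
    gtSel (P.sel ∪ S) A B → gtSel (Q.sel ∪ S) A B := by
  rintro ⟨r', hr', hlt, hii, hiii⟩
  have hsimPj : simB P r'.rank A B := fun r hr hrk => hiii r (Or.inl hr) hrk
  have hsimQj : simB Q r'.rank A B := (hsim A hA B hB r'.rank).1 hsimPj
  by_cases hq : ∀ q ∈ Q.sel, q.rank = r'.rank → degree A q ≤ degree B q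
  · rcases hr' with hrP | hrS
    · have hnP : ¬ simB P (r'.rank + 1) A B := fun hc =>
        absurd (hc r' hrP (by omega)) (ne_of_lt hlt)
      have hnQ : ¬ simB Q (r'.rank + 1) A B := fun hc =>
        hnP ((hsim A hA B hB (r'.rank + 1)).2 hc)
      simp only [simB, not_forall] at hnQ
      obtain ⟨q1, hq1, hq1r, hq1ne⟩ := hnQ
      have hq1j : q1.rank = r'.rank := by
        by_contra hne
        exact hq1ne (hsimQj q1 hq1 (by omega))
      have hq1lt : degree A q1 < degree B q1 := lt_of_le_of_ne (hq q1 hq1 hq1j) hq1ne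
      refine ⟨q1, Or.inl hq1, hq1lt, ?_, ?_⟩
      · intro r hr hrk
        rcases hr with h | h
        · exact hq r h (by rw [hrk, hq1j])
        · exact hii r (Or.inr h) (by rw [hrk, hq1j])
      · intro r hr hrk
        rw [hq1j] at hrk
        rcases hr with h | h
        · exact hsimQj r h hrk
        · exact hiii r (Or.inr h) hrk
    · refine ⟨r', Or.inr hrS, hlt, ?_, ?_⟩
      · intro r hr hrk
        rcases hr with h | h
        · exact hq r h hrk
        · exact hii r (Or.inr h) hrk
      · intro r hr hrk
        rcases hr with h | h
        · exact hsimQj r h hrk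
        · exact hiii r (Or.inr h) hrk
  · exfalso
    push_neg at hq
    obtain ⟨q1, hq1, hq1j, hq1gt⟩ := hq
    have hnQ : ¬ simB Q (r'.rank + 1) A B := fun hc => by
      have := hc q1 hq1 (by omega)
      omega
    have hnP : ¬ simB P (r'.rank + 1) A B := fun hc =>
      hnQ ((hsim A hA B hB (r'.rank + 1)).1 hc)
    simp only [simB, not_forall] at hnP
    obtain ⟨p, hp, hpr, hpne⟩ := hnP
    have hpj : p.rank = r'.rank := by
      by_contra hne
      exact hpne (hsimPj p hp (by omega))
    have hplt : degree A p < degree B p := lt_of_le_of_ne (hii p (Or.inl hp) hpj) hpne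
    have hgtP : gtSel P.sel A B := by
      refine ⟨p, hp, hplt, ?_, ?_⟩
      · intro r hr hrk
        exact hii r (Or.inl hr) (by rw [hrk, hpj])
      · intro r hr hrk
        rw [hpj] at hrk
        exact hsimPj r hr hrk
    obtain ⟨q'', hq'', hq''lt, hq''ii, hq''iii⟩ := hgt A hA B hB hgtP
    have h1 : ¬ (q1.rank < q''.rank) := fun hc => by
      have := hq''iii q1 hq1 hc
      omega
    have h2 : ¬ (q''.rank < r'.rank) := fun hc => by
      have := hsimQj q'' hq'' hc
      omega
    have hq''j : q''.rank = q1.rank := by omega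
    have := hq''ii q1 hq1 hq''j.symm
    omega

lemma backward_dir {sem : Sem} {P Q : OptProblem U}
    (h1 : outcomes sem P = outcomes sem Q)
    (hgt2 : ∀ A ∈ outcomes sem P, ∀ B ∈ outcomes sem P, (gtSel P.sel A B ↔ gtSel Q.sel A B))
    (hsim : ∀ A ∈ outcomes sem P, ∀ B ∈ outcomes sem P, ∀ k, simB P k A B ↔ simB Q k A B) :
    seqv sem 1 ⊤ P Q := by
  intro R hRgen _
  ext I
  rw [mem_pref_union hRgen, mem_pref_union hRgen, ← h1]
  constructor
  · rintro ⟨hI, hno⟩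
    refine ⟨hI, fun J hJ hg => hno J hJ ?_⟩
    exact gt_transfer (V := outcomes sem P)
      (fun A hA B hB => (hgt2 A hA B hB).2)
      (fun A hA B hB k => (hsim A hA B hB k).symm) hJ hI hg
  · rintro ⟨hI, hno⟩
    refine ⟨hI, fun J hJ hg => hno J hJ ?_⟩
    exact gt_transfer (V := outcomes sem P)
      (fun A hA B hB => (hgt2 A hA B hB).1)
      (fun A hA B hB k => hsim A hA B hB k) hJ hI hg

end Stmt3Aux
namespace Stmt3Aux

lemma outcomes_subset {sem : Sem} {P Q : OptProblem U} (hseq : seqv sem 1 ⊤ P Q) :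
    outcomes sem P ⊆ outcomes sem Q := by
  intro I hI
  set S : Set (Rule U) := (fun r => gGE r (degree I r) 1 le_rfl) '' P.sel with hSdef
  have hSfin : S.Finite := P.sel_finite.image _
  have hpq := hseq (ctx S hSfin) rfl (ctx_ok S hSfin).2
  have hIpref : I ∈ pref sem (P.union (ctx S hSfin)) := by
    rw [mem_pref_union rfl]
    refine ⟨hI, ?_⟩
    rintro K hK ⟨r', hr', hlt, hii, hiii⟩
    rcases hr' with hP | hS
    · have hg : gGE r' (degree I r') 1 le_rfl ∈ P.sel ∪ (ctx S hSfin).sel :=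
        Or.inr ⟨r', hP, rfl⟩
      have hdK : degree K (gGE r' (degree I r') 1 le_rfl) = 2 := by
        rw [degree_gGE, if_neg (by omega)]
      have hdI : degree I (gGE r' (degree I r') 1 le_rfl) = 1 := by
        rw [degree_gGE, if_pos le_rfl]
      rcases Nat.lt_or_ge 1 r'.rank with h | h
      · have := hiii _ hg (by simpa using h)
        omega
      · have hr1 : r'.rank = 1 := le_antisymm h r'.rank_pos
        have := hii _ hg (by simp [hr1])
        omega
    · exfalso
      obtain ⟨r0, hr0, rfl⟩ := hS
      have hlt' : degree K (gGE r0 (degree I r0) 1 le_rfl) <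
          degree I (gGE r0 (degree I r0) 1 le_rfl) := hlt
      have hdI : degree I (gGE r0 (degree I r0) 1 le_rfl) = 1 := by
        rw [degree_gGE, if_pos le_rfl]
      have := degree_pos K (gGE r0 (degree I r0) 1 le_rfl)
      omega
  rw [hpq, mem_pref_union rfl] at hIpref
  exact hIpref.1

end Stmt3Aux
namespace Stmt3Aux

lemma forced_le {K X : Set U} {W : Set (Rule U)} {r' : Rule U}
    (hii : ∀ r ∈ W, r.rank = r'.rank → degree K r ≤ degree X r)
    (hiii : ∀ r ∈ W, r.rank < r'.rank → degree K r = degree X r)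
    {g : Rule U} (hg : g ∈ W) (hgr : g.rank ≤ r'.rank) : degree K g ≤ degree X g := by
  rcases eq_or_lt_of_le hgr with h | h
  · exact hii g hg h
  · exact le_of_eq (hiii g hg h)

lemma caseA_core {sem : Sem} {P Q : OptProblem U} (hseq : seqv sem 1 ⊤ P Q)
    (hμ : outcomes sem P = outcomes sem Q) {I J : Set U}
    (hI : I ∈ outcomes sem P) (hJ : J ∈ outcomes sem P) {m : ℕ} (hm : 1 ≤ m)
    (hPm1 : simB P (m + 1) I J) (hQm : simB Q m I J)
    {q0 : Rule U} (hq0 : q0 ∈ Q.sel) (hq0r : q0.rank = m)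
    (hq0lt : degree J q0 < degree I q0) : False := by
  classical
  set T : Set (Rule U) := P.sel ∪ Q.sel with hT
  have hTfin : T.Finite := P.sel_finite.union Q.sel_finite
  set EQ : Set (Rule U) := {r | r ∈ T ∧ degree I r = degree J r} with hEQ
  have hEQfin : EQ.Finite := hTfin.subset (fun r hr => hr.1)
  set Qm : Set (Rule U) := {q | q ∈ Q.sel ∧ q.rank = m} with hQmdef
  have hQmfin : Qm.Finite := Q.sel_finite.subset (fun q hq => hq.1)
  have hP_EQ : ∀ r ∈ P.sel, r.rank ≤ m → r ∈ EQ :=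
    fun r hr hrk => ⟨Or.inl hr, hPm1 r hr (by omega)⟩
  have hQ_EQ : ∀ r ∈ Q.sel, r.rank < m → r ∈ EQ :=
    fun r hr hrk => ⟨Or.inr hr, hQm r hr hrk⟩
  set 𝒦 : Set (Set U) := {K | K ∈ outcomes sem P ∧ (∀ r ∈ EQ, degree K r = degree J r) ∧
    (∀ q ∈ Qm, degree K q ≤ degree I q)} with h𝒦
  have hI𝒦 : I ∈ 𝒦 := ⟨hI, fun r hr => hr.2, fun q _ => le_rfl⟩
  set f : Set U → ℕ := fun K => ∑ q ∈ hQmfin.toFinset, degree K q with hf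
  have hKne : (f '' 𝒦).Nonempty := ⟨f I, I, hI𝒦, rfl⟩
  obtain ⟨Ks, hKs𝒦, hKsf⟩ := Nat.sInf_mem hKne
  have hmin : ∀ K ∈ 𝒦, f Ks ≤ f K := fun K hK => hKsf ▸ Nat.sInf_le ⟨K, hK, rfl⟩
  have hKsμ : Ks ∈ outcomes sem P := hKs𝒦.1
  have hKsEQ : ∀ r ∈ EQ, degree Ks r = degree J r := hKs𝒦.2.1
  have hKsQm : ∀ q ∈ Qm, degree Ks q ≤ degree I q := hKs𝒦.2.2
  have hq0Qm : q0 ∈ Qm := ⟨hq0, hq0r⟩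
  have hm1 : 1 ≤ m + 1 := by omega
  -- choose beater B and special rule s1
  have hs1ex : ∃ (B : Set U) (s1 : Rule U), B ∈ outcomes sem P ∧ s1.rank = m ∧
      degree B s1 = 1 ∧ degree Ks s1 = 2 ∧ (∀ r ∈ EQ, degree B r = degree J r) ∧
      (∀ K : Set U, degree K s1 = 1 → (∀ q ∈ Qm, degree K q ≤ degree Ks q) →
        ∃ q ∈ Qm, degree K q < degree Ks q) := by
    by_cases hall : ∀ q ∈ Qm, degree Ks q = degree I q
    · refine ⟨J, gLE q0 (degree J q0) m hm, hJ, rfl, ?_, ?_, fun r hr => rfl, ?_⟩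
      · rw [degree_gLE J q0 (degree_pos J q0), if_pos le_rfl]
      · rw [degree_gLE Ks q0 (degree_pos J q0), if_neg (by rw [hall q0 hq0Qm]; omega)]
      · intro K hK1 hKle
        refine ⟨q0, hq0Qm, ?_⟩
        rw [degree_gLE K q0 (degree_pos J q0)] at hK1
        by_cases h : degree K q0 ≤ degree J q0
        · rw [hall q0 hq0Qm]; omega
        · rw [if_neg h] at hK1; omega
    · push_neg at hall
      obtain ⟨q', hq', hne⟩ := hall
      have hlt' : degree Ks q' < degree I q' := lt_of_le_of_ne (hKsQm q' hq') hne
      refine ⟨I, gGE q' (degree Ks q' + 1) m hm, hI, rfl, ?_, ?_, fun r hr => hr.2, ?_⟩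
      · rw [degree_gGE, if_pos (by omega)]
      · rw [degree_gGE, if_neg (by omega)]
      · intro K hK1 hKle
        exfalso
        rw [degree_gGE, if_neg (by have := hKle q' hq'; omega)] at hK1
        omega
  obtain ⟨B, s1, hBμ, hs1r, hBs1, hKss1, hBEQ, hkill⟩ := hs1ex
  -- the context
  set S : Set (Rule U) :=
    (((fun r => gLE r (degree J r) 1 le_rfl) '' EQ) ∪
     ((fun r => gGE r (degree J r) 1 le_rfl) '' EQ) ∪
     ((fun r => gGE r (degree Ks r) (m+1) hm1) '' T)) ∪ {s1} with hS
  have hSfin : S.Finite := by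
    apply Set.Finite.union
    · exact ((hEQfin.image _).union (hEQfin.image _)).union (hTfin.image _)
    · exact Set.finite_singleton _
  -- degrees of gadgets at Ks and B
  have hdeg_gLE_EQ : ∀ (K : Set U), (∀ r ∈ EQ, degree K r = degree J r) →
      ∀ r ∈ EQ, degree K (gLE r (degree J r) 1 le_rfl) = 1 := by
    intro K hKeq r hr
    rw [degree_gLE K r (degree_pos J r), if_pos (le_of_eq (hKeq r hr))]
  have hdeg_gGE_EQ : ∀ (K : Set U), (∀ r ∈ EQ, degree K r = degree J r) →
      ∀ r ∈ EQ, degree K (gGE r (degree J r) 1 le_rfl) = 1 := by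
    intro K hKeq r hr
    rw [degree_gGE, if_pos (ge_of_eq (hKeq r hr))]
  have hdeg_E_Ks : ∀ r ∈ T, degree Ks (gGE r (degree Ks r) (m+1) hm1) = 1 := by
    intro r hr
    rw [degree_gGE, if_pos le_rfl]
  -- Ks is not preferred in P ∪ S : B beats it
  have hBbeats : gtSel (P.sel ∪ S) B Ks := by
    refine ⟨s1, Or.inr (Or.inr rfl), by rw [hBs1, hKss1]; omega, ?_, ?_⟩
    · intro r hr hrk
      rw [hs1r] at hrk
      rcases hr with hrP | hrS
      · have hrEQ : r ∈ EQ := hP_EQ r hrP (le_of_eq hrk)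
        rw [hBEQ r hrEQ, hKsEQ r hrEQ]
      · rcases hrS with ((h | h) | h) | h
        · obtain ⟨r0, hr0, rfl⟩ := h
          rw [hdeg_gLE_EQ B hBEQ r0 hr0, hdeg_gLE_EQ Ks hKsEQ r0 hr0]
        · obtain ⟨r0, hr0, rfl⟩ := h
          rw [hdeg_gGE_EQ B hBEQ r0 hr0, hdeg_gGE_EQ Ks hKsEQ r0 hr0]
        · obtain ⟨r0, hr0, rfl⟩ := h
          have : m + 1 = m := by simpa using hrk
          omega
        · rw [Set.mem_singleton_iff] at h
          rw [h, hBs1, hKss1]; omega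
    · intro r hr hrk
      rw [hs1r] at hrk
      rcases hr with hrP | hrS
      · have hrEQ : r ∈ EQ := hP_EQ r hrP (by omega)
        rw [hBEQ r hrEQ, hKsEQ r hrEQ]
      · rcases hrS with ((h | h) | h) | h
        · obtain ⟨r0, hr0, rfl⟩ := h
          rw [hdeg_gLE_EQ B hBEQ r0 hr0, hdeg_gLE_EQ Ks hKsEQ r0 hr0]
        · obtain ⟨r0, hr0, rfl⟩ := h
          rw [hdeg_gGE_EQ B hBEQ r0 hr0, hdeg_gGE_EQ Ks hKsEQ r0 hr0]
        · obtain ⟨r0, hr0, rfl⟩ := h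
          have : m + 1 < m := by simpa using hrk
          omega
        · rw [Set.mem_singleton_iff] at h
          rw [h] at hrk
          rw [hs1r] at hrk
          omega
  -- nobody beats Ks in Q ∪ S
  have hKspref : ∀ K ∈ outcomes sem P, ¬ gtSel (Q.sel ∪ S) K Ks := by
    rintro K hKμ ⟨r', hr', hlt, hii, hiii⟩
    have hle_all : ∀ g ∈ Q.sel ∪ S, g.rank ≤ r'.rank → degree K g ≤ degree Ks g :=
      fun g hg hgr => forced_le hii hiii hg hgr
    -- equality on EQ is forced as soon as r'.rank ≥ 1
    have hEQforced : ∀ r ∈ EQ, degree K r = degree J r := by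
      intro r hr
      have hrk1 : (1 : ℕ) ≤ r'.rank := r'.rank_pos
      have h1 : degree K (gLE r (degree J r) 1 le_rfl) ≤ degree Ks (gLE r (degree J r) 1 le_rfl) :=
        hle_all _ (Or.inr (Or.inl (Or.inl (Or.inl ⟨r, hr, rfl⟩)))) (by simpa using hrk1)
      have h2 : degree K (gGE r (degree J r) 1 le_rfl) ≤ degree Ks (gGE r (degree J r) 1 le_rfl) :=
        hle_all _ (Or.inr (Or.inl (Or.inl (Or.inr ⟨r, hr, rfl⟩)))) (by simpa using hrk1)
      rw [hdeg_gLE_EQ Ks hKsEQ r hr] at h1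
      rw [hdeg_gGE_EQ Ks hKsEQ r hr] at h2
      rw [degree_gLE K r (degree_pos J r)] at h1
      rw [degree_gGE] at h2
      by_cases hb1 : degree K r ≤ degree J r
      · by_cases hb2 : degree J r ≤ degree K r
        · omega
        · rw [if_neg hb2] at h2; omega
      · rw [if_neg hb1] at h1; omega
    -- the strict witness analysis
    rcases hr' with hrQ | hrS
    · -- r' ∈ Q.sel
      rcases lt_trichotomy r'.rank m with hc | hc | hc
      · -- rank < m : killed by the rank-1 ≥-gadget on EQ
        have hrEQ : r' ∈ EQ := hQ_EQ r' hrQ hc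
        have := hEQforced r' hrEQ
        rw [hKsEQ r' hrEQ] at hlt
        omega
      · -- rank = m : contradiction with minimality of Ks
        have hQmle : ∀ q ∈ Qm, degree K q ≤ degree Ks q := by
          intro q hq
          exact hle_all q (Or.inl hq.1) (by rw [hq.2, hc])
        have hK𝒦 : K ∈ 𝒦 := by
          refine ⟨hKμ, hEQforced, fun q hq => le_trans (hQmle q hq) (hKsQm q hq)⟩
        have hdrop : ∃ q ∈ Qm, degree K q < degree Ks q := ⟨r', ⟨hrQ, hc⟩, hlt⟩
        have hsum : f K < f Ks := by
          apply Finset.sum_lt_sum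
          · intro q hq
            exact hQmle q (hQmfin.mem_toFinset.1 hq)
          · obtain ⟨q, hq, hqlt⟩ := hdrop
            exact ⟨q, hQmfin.mem_toFinset.2 hq, hqlt⟩
        have := hmin K hK𝒦
        omega
      · -- rank > m : killed by the rank-(m+1) gadget
        have hrT : r' ∈ T := Or.inr hrQ
        have h1 : degree K (gGE r' (degree Ks r') (m+1) hm1) ≤
            degree Ks (gGE r' (degree Ks r') (m+1) hm1) :=
          hle_all _ (Or.inr (Or.inl (Or.inr ⟨r', hrT, rfl⟩))) (by simpa using hc)
        rw [hdeg_E_Ks r' hrT] at h1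
        rw [degree_gGE, if_neg (by omega)] at h1
        omega
    · -- r' ∈ S
      rcases hrS with ((h | h) | h) | h
      · obtain ⟨r0, hr0, rfl⟩ := h
        have hlt' : degree K (gLE r0 (degree J r0) 1 le_rfl) <
            degree Ks (gLE r0 (degree J r0) 1 le_rfl) := hlt
        have h1 : degree Ks (gLE r0 (degree J r0) 1 le_rfl) = 1 := hdeg_gLE_EQ Ks hKsEQ r0 hr0
        have := degree_pos K (gLE r0 (degree J r0) 1 le_rfl)
        omega
      · obtain ⟨r0, hr0, rfl⟩ := h
        have hlt' : degree K (gGE r0 (degree J r0) 1 le_rfl) <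
            degree Ks (gGE r0 (degree J r0) 1 le_rfl) := hlt
        have h1 : degree Ks (gGE r0 (degree J r0) 1 le_rfl) = 1 := hdeg_gGE_EQ Ks hKsEQ r0 hr0
        have := degree_pos K (gGE r0 (degree J r0) 1 le_rfl)
        omega
      · obtain ⟨r0, hr0, rfl⟩ := h
        have hlt' : degree K (gGE r0 (degree Ks r0) (m+1) hm1) <
            degree Ks (gGE r0 (degree Ks r0) (m+1) hm1) := hlt
        have h1 := hdeg_E_Ks r0 hr0
        have := degree_pos K (gGE r0 (degree Ks r0) (m+1) hm1)
        omega
      · rw [Set.mem_singleton_iff] at h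
        rw [h] at hlt
        have hK1 : degree K s1 = 1 := by
          have := degree_pos K s1
          omega
        have hQmle : ∀ q ∈ Qm, degree K q ≤ degree Ks q := by
          intro q hq
          exact hle_all q (Or.inl hq.1) (by rw [hq.2, h, hs1r])
        obtain ⟨q, hq, hqlt⟩ := hkill K hK1 hQmle
        have hK𝒦 : K ∈ 𝒦 :=
          ⟨hKμ, hEQforced, fun q' hq' => le_trans (hQmle q' hq') (hKsQm q' hq')⟩
        have hsum : f K < f Ks := by
          apply Finset.sum_lt_sum
          · intro q' hq'
            exact hQmle q' (hQmfin.mem_toFinset.1 hq')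
          · exact ⟨q, hQmfin.mem_toFinset.2 hq, hqlt⟩
        have := hmin K hK𝒦
        omega
  -- contradiction with strong equivalence
  have hpq := hseq (ctx S hSfin) rfl (ctx_ok S hSfin).2
  have hKsQpref : Ks ∈ pref sem (Q.union (ctx S hSfin)) := by
    rw [mem_pref_union rfl]
    rw [← hμ]
    exact ⟨hKsμ, hKspref⟩
  rw [← hpq, mem_pref_union rfl] at hKsQpref
  exact hKsQpref.2 B hBμ hBbeats

end Stmt3Aux
namespace Stmt3Aux

lemma sim_forward {sem : Sem} {P Q : OptProblem U} (hseq : seqv sem 1 ⊤ P Q)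
    (hμ : outcomes sem P = outcomes sem Q) :
    ∀ I ∈ outcomes sem P, ∀ J ∈ outcomes sem P, ∀ k, simB P k I J → simB Q k I J := by
  by_contra hbad
  push_neg at hbad
  obtain ⟨I, hI, J, hJ, k0, hsimP0, hnQ0⟩ := hbad
  set bad : Set ℕ := {k | ∃ I' ∈ outcomes sem P, ∃ J' ∈ outcomes sem P,
    simB P k I' J' ∧ ¬ simB Q k I' J'} with hbaddef
  have hbadne : bad.Nonempty := ⟨k0, I, hI, J, hJ, hsimP0, hnQ0⟩
  obtain ⟨I', hI', J', hJ', hsimP, hnQ⟩ := Nat.sInf_mem hbadne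
  set k := sInf bad with hk
  have hminbad : ∀ k' < k, ∀ A ∈ outcomes sem P, ∀ B ∈ outcomes sem P,
      simB P k' A B → simB Q k' A B := by
    intro k' hk' A hA B hB hP
    by_contra hc
    have : k' ∈ bad := ⟨A, hA, B, hB, hP, hc⟩
    have := Nat.sInf_le this
    omega
  have hk2 : 2 ≤ k := by
    by_contra hc
    push_neg at hc
    apply hnQ
    intro r hr hrk
    have := r.rank_pos
    omega
  set m := k - 1 with hm
  have hm1 : 1 ≤ m := by omega
  have hkm : k = m + 1 := by omega
  have hsimPm1 : simB P (m + 1) I' J' := by rw [← hkm]; exact hsimP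
  have hsimQm : simB Q m I' J' :=
    hminbad m (by omega) I' hI' J' hJ' (simB_mono P (by omega) hsimP)
  rw [hkm] at hnQ
  simp only [simB, not_forall] at hnQ
  obtain ⟨q0, hq0, hq0r, hq0ne⟩ := hnQ
  have hq0m : q0.rank = m := by
    by_contra hc
    exact hq0ne (hsimQm q0 hq0 (by omega))
  rcases lt_or_gt_of_ne hq0ne with hlt | hlt
  · -- degree I' q0 < degree J' q0 : apply with roles of I', J' swapped
    exact caseA_core hseq hμ hJ' hI' hm1 (simB_symm hsimPm1) (simB_symm hsimQm) hq0 hq0m hlt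
  · exact caseA_core hseq hμ hI' hJ' hm1 hsimPm1 hsimQm hq0 hq0m hlt

end Stmt3Aux
namespace Stmt3Aux

lemma gt_forward {sem : Sem} {P Q : OptProblem U} (hseq : seqv sem 1 ⊤ P Q)
    (hμ : outcomes sem P = outcomes sem Q)
    (hsim : ∀ A ∈ outcomes sem P, ∀ B ∈ outcomes sem P, ∀ k, simB P k A B → simB Q k A B)
    (hsim' : ∀ A ∈ outcomes sem P, ∀ B ∈ outcomes sem P, ∀ k, simB Q k A B → simB P k A B) :
    ∀ I ∈ outcomes sem P, ∀ J ∈ outcomes sem P, gtSel P.sel I J → gtSel Q.sel I J := by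
  intro I hI J hJ hgtP
  by_contra hnQ
  obtain ⟨p0, hp0, hp0lt, hPii, hPiii⟩ := hgtP
  set m := p0.rank with hmdef
  have hm : 1 ≤ m := p0.rank_pos
  have hm1 : 1 ≤ m + 1 := by omega
  have hsimPm : simB P m I J := fun r hr hrk => hPiii r hr hrk
  have hsimQm : simB Q m I J := hsim I hI J hJ m hsimPm
  have hnotPm1 : ¬ simB P (m + 1) I J := fun hc => by
    have := hc p0 hp0 (by omega)
    omega
  have hnotQm1 : ¬ simB Q (m + 1) I J := fun hc => hnotPm1 (hsim' I hI J hJ (m+1) hc)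
  -- get q1 ∈ Q.sel of rank m with degree J q1 < degree I q1
  have hq1ex : ∃ q1 ∈ Q.sel, q1.rank = m ∧ degree J q1 < degree I q1 := by
    by_contra hc
    push_neg at hc
    apply hnQ
    simp only [simB, not_forall] at hnotQm1
    obtain ⟨q, hq, hqr, hqne⟩ := hnotQm1
    have hqm : q.rank = m := by
      by_contra hne
      exact hqne (hsimQm q hq (by omega))
    have hqlt : degree I q < degree J q := by
      have := hc q hq hqm
      omega
    refine ⟨q, hq, hqlt, ?_, ?_⟩
    · intro r hr hrk
      rw [hqm] at hrk
      by_contra hgt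
      push_neg at hgt
      have := hc r hr hrk
      omega
    · intro r hr hrk
      rw [hqm] at hrk
      exact hsimQm r hr hrk
  obtain ⟨q1, hq1, hq1m, hq1lt⟩ := hq1ex
  classical
  set T : Set (Rule U) := P.sel ∪ Q.sel with hT
  have hTfin : T.Finite := P.sel_finite.union Q.sel_finite
  set EQ : Set (Rule U) := {r | r ∈ T ∧ degree I r = degree J r} with hEQ
  have hEQfin : EQ.Finite := hTfin.subset (fun r hr => hr.1)
  set Pm : Set (Rule U) := {p | p ∈ P.sel ∧ p.rank = m} with hPmdef
  have hPmfin : Pm.Finite := P.sel_finite.subset (fun p hp => hp.1)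
  set Qm : Set (Rule U) := {q | q ∈ Q.sel ∧ q.rank = m} with hQmdef
  have hQmfin : Qm.Finite := Q.sel_finite.subset (fun q hq => hq.1)
  set Tm : Set (Rule U) := Pm ∪ Qm with hTmdef
  have hTmfin : Tm.Finite := hPmfin.union hQmfin
  have hP_EQ : ∀ r ∈ P.sel, r.rank < m → r ∈ EQ :=
    fun r hr hrk => ⟨Or.inl hr, hsimPm r hr hrk⟩
  have hQ_EQ : ∀ r ∈ Q.sel, r.rank < m → r ∈ EQ :=
    fun r hr hrk => ⟨Or.inr hr, hsimQm r hr hrk⟩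
  have hPmle : ∀ p ∈ Pm, degree I p ≤ degree J p :=
    fun p hp => hPii p hp.1 hp.2
  set 𝒦 : Set (Set U) := {K | K ∈ outcomes sem P ∧ (∀ r ∈ EQ, degree K r = degree J r) ∧
    (∀ p ∈ Pm, degree I p ≤ degree K p ∧ degree K p ≤ degree J p) ∧
    (∀ q ∈ Qm, degree K q ≤ degree J q)} with h𝒦
  have hJ𝒦 : J ∈ 𝒦 :=
    ⟨hJ, fun r hr => rfl, fun p hp => ⟨hPmle p hp, le_rfl⟩, fun q _ => le_rfl⟩
  set f : Set U → ℕ := fun K => ∑ q ∈ hTmfin.toFinset, degree K q with hf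
  have hKne : (f '' 𝒦).Nonempty := ⟨f J, J, hJ𝒦, rfl⟩
  obtain ⟨Ks, hKs𝒦, hKsf⟩ := Nat.sInf_mem hKne
  have hmin : ∀ K ∈ 𝒦, f Ks ≤ f K := fun K hK => hKsf ▸ Nat.sInf_le ⟨K, hK, rfl⟩
  have hKsμ : Ks ∈ outcomes sem P := hKs𝒦.1
  have hKsEQ : ∀ r ∈ EQ, degree Ks r = degree J r := hKs𝒦.2.1
  have hKsPm : ∀ p ∈ Pm, degree I p ≤ degree Ks p ∧ degree Ks p ≤ degree J p := hKs𝒦.2.2.1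
  have hKsQm : ∀ q ∈ Qm, degree Ks q ≤ degree J q := hKs𝒦.2.2.2
  have hq1Qm : q1 ∈ Qm := ⟨hq1, hq1m⟩
  have hKsq1 : degree Ks q1 < degree I q1 := lt_of_le_of_lt (hKsQm q1 hq1Qm) hq1lt
  -- the special rule
  set s1 : Rule U := gGE q1 (degree Ks q1 + 1) m hm with hs1def
  have hIs1 : degree I s1 = 1 := by rw [hs1def, degree_gGE, if_pos (by omega)]
  have hKss1 : degree Ks s1 = 2 := by rw [hs1def, degree_gGE, if_neg (by omega)]
  -- the context
  set S : Set (Rule U) :=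
    ((((fun r => gLE r (degree J r) 1 le_rfl) '' EQ) ∪
      ((fun r => gGE r (degree J r) 1 le_rfl) '' EQ)) ∪
     (((fun p => gLE p (degree Ks p) m hm) '' Pm) ∪
      ((fun p => gGE p (degree I p) m hm) '' Pm)) ∪
     ((fun r => gGE r (degree Ks r) (m+1) hm1) '' T)) ∪ {s1} with hS
  have hSfin : S.Finite := by
    apply Set.Finite.union
    · exact (((hEQfin.image _).union (hEQfin.image _)).union
        ((hPmfin.image _).union (hPmfin.image _))).union (hTfin.image _)
    · exact Set.finite_singleton _
  have hdeg_gLE_EQ : ∀ (K : Set U), (∀ r ∈ EQ, degree K r = degree J r) →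
      ∀ r ∈ EQ, degree K (gLE r (degree J r) 1 le_rfl) = 1 := by
    intro K hKeq r hr
    rw [degree_gLE K r (degree_pos J r), if_pos (le_of_eq (hKeq r hr))]
  have hdeg_gGE_EQ : ∀ (K : Set U), (∀ r ∈ EQ, degree K r = degree J r) →
      ∀ r ∈ EQ, degree K (gGE r (degree J r) 1 le_rfl) = 1 := by
    intro K hKeq r hr
    rw [degree_gGE, if_pos (ge_of_eq (hKeq r hr))]
  have hdeg_E_Ks : ∀ r ∈ T, degree Ks (gGE r (degree Ks r) (m+1) hm1) = 1 := by
    intro r hr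
    rw [degree_gGE, if_pos le_rfl]
  have hIEQ : ∀ r ∈ EQ, degree I r = degree J r := fun r hr => hr.2
  -- I beats Ks in P ∪ S
  have hBbeats : gtSel (P.sel ∪ S) I Ks := by
    refine ⟨s1, Or.inr (Or.inr rfl), by rw [hIs1, hKss1]; omega, ?_, ?_⟩
    · intro r hr hrk
      have hrkm : r.rank = m := hrk
      rcases hr with hrP | hrS
      · have hrPm : r ∈ Pm := ⟨hrP, hrkm⟩
        exact le_trans (hKsPm r hrPm).1 (le_refl _)
      · rcases hrS with (((h | h) | (h | h)) | h) | h
        · obtain ⟨r0, hr0, rfl⟩ := h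
          rw [hdeg_gLE_EQ I hIEQ r0 hr0, hdeg_gLE_EQ Ks hKsEQ r0 hr0]
        · obtain ⟨r0, hr0, rfl⟩ := h
          rw [hdeg_gGE_EQ I hIEQ r0 hr0, hdeg_gGE_EQ Ks hKsEQ r0 hr0]
        · obtain ⟨p, hp, rfl⟩ := h
          have h1 : degree I (gLE p (degree Ks p) m hm) = 1 := by
            rw [degree_gLE I p (degree_pos Ks p), if_pos (hKsPm p hp).1]
          have h2 : degree Ks (gLE p (degree Ks p) m hm) = 1 := by
            rw [degree_gLE Ks p (degree_pos Ks p), if_pos le_rfl]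
          exact le_of_eq (by rw [h1, h2])
        · obtain ⟨p, hp, rfl⟩ := h
          have h1 : degree I (gGE p (degree I p) m hm) = 1 := by
            rw [degree_gGE, if_pos le_rfl]
          have h2 : degree Ks (gGE p (degree I p) m hm) = 1 := by
            rw [degree_gGE, if_pos (hKsPm p hp).1]
          exact le_of_eq (by rw [h1, h2])
        · obtain ⟨r0, hr0, rfl⟩ := h
          have : m + 1 = m := by simpa using hrkm
          omega
        · rw [Set.mem_singleton_iff] at h
          rw [h, hIs1, hKss1]; omega
    · intro r hr hrk
      have hrkm : r.rank < m := hrk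
      rcases hr with hrP | hrS
      · have hrEQ : r ∈ EQ := hP_EQ r hrP hrkm
        rw [hIEQ r hrEQ, hKsEQ r hrEQ]
      · rcases hrS with (((h | h) | (h | h)) | h) | h
        · obtain ⟨r0, hr0, rfl⟩ := h
          rw [hdeg_gLE_EQ I hIEQ r0 hr0, hdeg_gLE_EQ Ks hKsEQ r0 hr0]
        · obtain ⟨r0, hr0, rfl⟩ := h
          rw [hdeg_gGE_EQ I hIEQ r0 hr0, hdeg_gGE_EQ Ks hKsEQ r0 hr0]
        · obtain ⟨p, hp, rfl⟩ := h
          have : m < m := by simpa using hrkm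
          omega
        · obtain ⟨p, hp, rfl⟩ := h
          have : m < m := by simpa using hrkm
          omega
        · obtain ⟨r0, hr0, rfl⟩ := h
          have : m + 1 < m := by simpa using hrkm
          omega
        · rw [Set.mem_singleton_iff] at h
          rw [h] at hrkm
          have : (s1 : Rule U).rank = m := rfl
          omega
  -- nobody beats Ks in Q ∪ S
  have hKspref : ∀ K ∈ outcomes sem P, ¬ gtSel (Q.sel ∪ S) K Ks := by
    rintro K hKμ ⟨r', hr', hlt, hii, hiii⟩
    have hle_all : ∀ g ∈ Q.sel ∪ S, g.rank ≤ r'.rank → degree K g ≤ degree Ks g :=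
      fun g hg hgr => forced_le hii hiii hg hgr
    have hEQforced : ∀ r ∈ EQ, degree K r = degree J r := by
      intro r hr
      have hrk1 : (1 : ℕ) ≤ r'.rank := r'.rank_pos
      have h1 : degree K (gLE r (degree J r) 1 le_rfl) ≤ degree Ks (gLE r (degree J r) 1 le_rfl) :=
        hle_all _ (Or.inr (Or.inl (Or.inl (Or.inl (Or.inl ⟨r, hr, rfl⟩))))) (by simpa using hrk1)
      have h2 : degree K (gGE r (degree J r) 1 le_rfl) ≤ degree Ks (gGE r (degree J r) 1 le_rfl) :=
        hle_all _ (Or.inr (Or.inl (Or.inl (Or.inl (Or.inr ⟨r, hr, rfl⟩))))) (by simpa using hrk1)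
      rw [hdeg_gLE_EQ Ks hKsEQ r hr] at h1
      rw [hdeg_gGE_EQ Ks hKsEQ r hr] at h2
      rw [degree_gLE K r (degree_pos J r)] at h1
      rw [degree_gGE] at h2
      by_cases hb1 : degree K r ≤ degree J r
      · by_cases hb2 : degree J r ≤ degree K r
        · omega
        · rw [if_neg hb2] at h2; omega
      · rw [if_neg hb1] at h1; omega
    -- when the witness has rank m we can force K into 𝒦 with smaller value
    have hrankm : r'.rank = m → False := by
      intro hrm
      have hQmle : ∀ q ∈ Qm, degree K q ≤ degree Ks q := by
        intro q hq
        exact hle_all q (Or.inl hq.1) (by rw [hq.2, hrm])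
      have hPmforced : ∀ p ∈ Pm, degree I p ≤ degree K p ∧ degree K p ≤ degree Ks p := by
        intro p hp
        have h1 : degree K (gLE p (degree Ks p) m hm) ≤ degree Ks (gLE p (degree Ks p) m hm) :=
          hle_all _ (Or.inr (Or.inl (Or.inl (Or.inr (Or.inl ⟨p, hp, rfl⟩))))) (by simp [hrm])
        have h2 : degree K (gGE p (degree I p) m hm) ≤ degree Ks (gGE p (degree I p) m hm) :=
          hle_all _ (Or.inr (Or.inl (Or.inl (Or.inr (Or.inr ⟨p, hp, rfl⟩))))) (by simp [hrm])
        have h1' : degree Ks (gLE p (degree Ks p) m hm) = 1 := by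
          rw [degree_gLE Ks p (degree_pos Ks p), if_pos le_rfl]
        have h2' : degree Ks (gGE p (degree I p) m hm) = 1 := by
          rw [degree_gGE, if_pos (hKsPm p hp).1]
        rw [h1', degree_gLE K p (degree_pos Ks p)] at h1
        rw [h2', degree_gGE] at h2
        constructor
        · by_cases hb : degree I p ≤ degree K p
          · exact hb
          · rw [if_neg hb] at h2; omega
        · by_cases hb : degree K p ≤ degree Ks p
          · exact hb
          · rw [if_neg hb] at h1; omega
      have hstrict : ∃ t ∈ Tm, degree K t < degree Ks t := by
        rcases hr' with hrQ | hrS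
        · exact ⟨r', Or.inr ⟨hrQ, hrm⟩, hlt⟩
        · exfalso
          rcases hrS with (((h | h) | (h | h)) | h) | h
          · obtain ⟨r0, hr0, rfl⟩ := h
            have hlt' : degree K (gLE r0 (degree J r0) 1 le_rfl) <
                degree Ks (gLE r0 (degree J r0) 1 le_rfl) := hlt
            have h1 := hdeg_gLE_EQ Ks hKsEQ r0 hr0
            have := degree_pos K (gLE r0 (degree J r0) 1 le_rfl)
            omega
          · obtain ⟨r0, hr0, rfl⟩ := h
            have hlt' : degree K (gGE r0 (degree J r0) 1 le_rfl) <
                degree Ks (gGE r0 (degree J r0) 1 le_rfl) := hlt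
            have h1 := hdeg_gGE_EQ Ks hKsEQ r0 hr0
            have := degree_pos K (gGE r0 (degree J r0) 1 le_rfl)
            omega
          · obtain ⟨p, hp, rfl⟩ := h
            have hlt' : degree K (gLE p (degree Ks p) m hm) <
                degree Ks (gLE p (degree Ks p) m hm) := hlt
            have h1 : degree Ks (gLE p (degree Ks p) m hm) = 1 := by
              rw [degree_gLE Ks p (degree_pos Ks p), if_pos le_rfl]
            have := degree_pos K (gLE p (degree Ks p) m hm)
            omega
          · obtain ⟨p, hp, rfl⟩ := h
            have hlt' : degree K (gGE p (degree I p) m hm) <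
                degree Ks (gGE p (degree I p) m hm) := hlt
            have h1 : degree Ks (gGE p (degree I p) m hm) = 1 := by
              rw [degree_gGE, if_pos (hKsPm p hp).1]
            have := degree_pos K (gGE p (degree I p) m hm)
            omega
          · obtain ⟨r0, hr0, rfl⟩ := h
            have hlt' : degree K (gGE r0 (degree Ks r0) (m+1) hm1) <
                degree Ks (gGE r0 (degree Ks r0) (m+1) hm1) := hlt
            have h1 := hdeg_E_Ks r0 hr0
            have := degree_pos K (gGE r0 (degree Ks r0) (m+1) hm1)
            omega
          · rw [Set.mem_singleton_iff] at h
            rw [h] at hlt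
            have hK1 : degree K s1 = 1 := by
              have := degree_pos K s1
              omega
            rw [hs1def, degree_gGE] at hK1
            have hq1le : degree K q1 ≤ degree Ks q1 := hQmle q1 hq1Qm
            by_cases hb : degree Ks q1 + 1 ≤ degree K q1
            · omega
            · rw [if_neg hb] at hK1; omega
      have hK𝒦 : K ∈ 𝒦 := by
        refine ⟨hKμ, hEQforced, ?_, ?_⟩
        · intro p hp
          exact ⟨(hPmforced p hp).1, le_trans (hPmforced p hp).2 (hKsPm p hp).2⟩
        · intro q hq
          exact le_trans (hQmle q hq) (hKsQm q hq)
      have hsum : f K < f Ks := by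
        apply Finset.sum_lt_sum
        · intro t ht
          rcases hTmfin.mem_toFinset.1 ht with htP | htQ
          · exact (hPmforced t htP).2
          · exact hQmle t htQ
        · obtain ⟨t, ht, htlt⟩ := hstrict
          exact ⟨t, hTmfin.mem_toFinset.2 ht, htlt⟩
      have := hmin K hK𝒦
      omega
    -- now rule out the other ranks
    rcases hr' with hrQ | hrS
    · rcases lt_trichotomy r'.rank m with hc | hc | hc
      · have hrEQ : r' ∈ EQ := hQ_EQ r' hrQ hc
        have := hEQforced r' hrEQ
        rw [hKsEQ r' hrEQ] at hlt
        omega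
      · exact hrankm hc
      · have hrT : r' ∈ T := Or.inr hrQ
        have h1 : degree K (gGE r' (degree Ks r') (m+1) hm1) ≤
            degree Ks (gGE r' (degree Ks r') (m+1) hm1) :=
          hle_all _ (Or.inr (Or.inl (Or.inr ⟨r', hrT, rfl⟩))) (by simpa using hc)
        rw [hdeg_E_Ks r' hrT] at h1
        rw [degree_gGE, if_neg (by omega)] at h1
        omega
    · rcases hrS with (((h | h) | (h | h)) | h) | h
      · obtain ⟨r0, hr0, rfl⟩ := h
        have hlt' : degree K (gLE r0 (degree J r0) 1 le_rfl) <
            degree Ks (gLE r0 (degree J r0) 1 le_rfl) := hlt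
        have h1 := hdeg_gLE_EQ Ks hKsEQ r0 hr0
        have := degree_pos K (gLE r0 (degree J r0) 1 le_rfl)
        omega
      · obtain ⟨r0, hr0, rfl⟩ := h
        have hlt' : degree K (gGE r0 (degree J r0) 1 le_rfl) <
            degree Ks (gGE r0 (degree J r0) 1 le_rfl) := hlt
        have h1 := hdeg_gGE_EQ Ks hKsEQ r0 hr0
        have := degree_pos K (gGE r0 (degree J r0) 1 le_rfl)
        omega
      · obtain ⟨p, hp, rfl⟩ := h
        exact hrankm rfl
      · obtain ⟨p, hp, rfl⟩ := h
        exact hrankm rfl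
      · obtain ⟨r0, hr0, rfl⟩ := h
        have hlt' : degree K (gGE r0 (degree Ks r0) (m+1) hm1) <
            degree Ks (gGE r0 (degree Ks r0) (m+1) hm1) := hlt
        have h1 := hdeg_E_Ks r0 hr0
        have := degree_pos K (gGE r0 (degree Ks r0) (m+1) hm1)
        omega
      · rw [Set.mem_singleton_iff] at h
        apply hrankm
        rw [h]
        rfl
  -- contradiction with strong equivalence
  have hpq := hseq (ctx S hSfin) rfl (ctx_ok S hSfin).2
  have hKsQpref : Ks ∈ pref sem (Q.union (ctx S hSfin)) := by
    rw [mem_pref_union rfl, ← hμ]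
    exact ⟨hKsμ, hKspref⟩
  rw [← hpq, mem_pref_union rfl] at hKsQpref
  exact hKsQpref.2 I hI hBbeats

end Stmt3Aux
/-- Corollary 4: characterization of `P ≡^s Q` (i.e. `P ≡^{s,[1,∞]} Q`). -/
theorem stmt3 {U : Type} [Countable U] (sem : Sem) (P Q : OptProblem U) :
    seqv sem 1 ⊤ P Q ↔
      (outcomes sem P = outcomes sem Q ∧
       restrictRel (gtSel P.sel) (outcomes sem P) =
         restrictRel (gtSel Q.sel) (outcomes sem Q) ∧
       (∀ I ∈ outcomes sem P, ∀ J ∈ outcomes sem P, diff P I J = diff Q I J)) := by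
  open Stmt3Aux in
  constructor
  · intro hseq
    have hμ : outcomes sem P = outcomes sem Q :=
      Set.Subset.antisymm (outcomes_subset hseq) (outcomes_subset (seqv_symm hseq))
    have hsimPQ : ∀ A ∈ outcomes sem P, ∀ B ∈ outcomes sem P, ∀ k,
        simB P k A B → simB Q k A B := sim_forward hseq hμ
    have hsimQP : ∀ A ∈ outcomes sem P, ∀ B ∈ outcomes sem P, ∀ k,
        simB Q k A B → simB P k A B := by
      intro A hA B hB k
      exact sim_forward (seqv_symm hseq) hμ.symm A (hμ ▸ hA) B (hμ ▸ hB) k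
    have hgtPQ : ∀ A ∈ outcomes sem P, ∀ B ∈ outcomes sem P,
        gtSel P.sel A B → gtSel Q.sel A B := gt_forward hseq hμ hsimPQ hsimQP
    have hgtQP : ∀ A ∈ outcomes sem P, ∀ B ∈ outcomes sem P,
        gtSel Q.sel A B → gtSel P.sel A B := by
      intro A hA B hB
      have := gt_forward (seqv_symm hseq) hμ.symm
        (fun A' hA' B' hB' k => hsimQP A' (hμ.symm ▸ hA') B' (hμ.symm ▸ hB') k)
        (fun A' hA' B' hB' k => hsimPQ A' (hμ.symm ▸ hA') B' (hμ.symm ▸ hB') k)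
        A (hμ ▸ hA) B (hμ ▸ hB)
      exact this
    refine ⟨hμ, ?_, ?_⟩
    · funext A B
      apply propext
      constructor
      · rintro ⟨hg, hA, hB⟩
        exact ⟨hgtPQ A hA B hB hg, hμ ▸ hA, hμ ▸ hB⟩
      · rintro ⟨hg, hA, hB⟩
        rw [← hμ] at hA hB
        exact ⟨hgtQP A hA B hB hg, hA, hB⟩
    · intro I hI J hJ
      exact diff_eq_of_simB_iff
        (fun k => ⟨hsimPQ I hI J hJ k, hsimQP I hI J hJ k⟩)
  · rintro ⟨h1, h2, h3⟩
    have hgt2 : ∀ A ∈ outcomes sem P, ∀ B ∈ outcomes sem P,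
        gtSel P.sel A B ↔ gtSel Q.sel A B := by
      intro A hA B hB
      have hAB := congrFun (congrFun h2 A) B
      constructor
      · intro hg
        exact ((Iff.of_eq hAB).1 ⟨hg, hA, hB⟩).1
      · intro hg
        exact ((Iff.of_eq hAB).2 ⟨hg, h1 ▸ hA, h1 ▸ hB⟩).1
    exact backward_dir h1 hgt2
      (fun A hA B hB k => simB_iff_of_diff_eq (h3 A hA B hB) k)
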